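/- For γ̄_b > 0 and 0 < Γ < max_{x≥0} x·exp((1 − 2^x)/γ̄_b), the equation x·exp((1 − 2^x)/γ̄_b) = Γ has exactly two solutions x_min < x_max in (0, ∞). -/

import Mathlib

open Real

private lemma stmt7_hasDerivAt (γb x : ℝ) :
    HasDerivAt (fun x => x * Real.exp ((1 - Real.exp (Real.log 2 * x)) / γb))
      (Real.exp ((1 - Real.exp (Real.log 2 * x)) / γb) *
        (1 - Real.log 2 * x * Real.exp (Real.log 2 * x) / γb)) x := by
  have h1 : HasDerivAt (fun y : ℝ => Real.log 2 * y) (Real.log 2) x := by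
    simpa using (hasDerivAt_id x).const_mul (Real.log 2)
  have h2 := h1.exp
  have h3 : HasDerivAt (fun y => (1 - Real.exp (Real.log 2 * y)) / γb)
      (-(Real.exp (Real.log 2 * x) * Real.log 2) / γb) x := by
    simpa using ((hasDerivAt_const x (1:ℝ)).sub h2).div_const γb
  have h4 := h3.exp
  have h5 := (hasDerivAt_id x).mul h4
  exact h5.congr_deriv (by simp only [id]; ring)

theorem stmt_7 (γb Γ : ℝ) (hγb : 0 < γb) (hΓ : 0 < Γ)
    (hΓmax : Γ < sSup {y : ℝ | ∃ x : ℝ, 0 ≤ x ∧ y = x * Real.exp ((1 - (2 : ℝ) ^ x) / γb)}) :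
    ∃ xmin xmax : ℝ, 0 < xmin ∧ xmin < xmax ∧
      xmin * Real.exp ((1 - (2 : ℝ) ^ xmin) / γb) = Γ ∧
      xmax * Real.exp ((1 - (2 : ℝ) ^ xmax) / γb) = Γ ∧
      ∀ x : ℝ, 0 < x → x * Real.exp ((1 - (2 : ℝ) ^ x) / γb) = Γ →
        x = xmin ∨ x = xmax := by
  set c := Real.log 2 with hc_def
  have hc : 0 < c := Real.log_pos (by norm_num)
  set f : ℝ → ℝ := fun x => x * Real.exp ((1 - Real.exp (c * x)) / γb) with hf_def
  have hrw : ∀ x : ℝ, x * Real.exp ((1 - (2 : ℝ) ^ x) / γb) = f x := by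
    intro x
    rw [hf_def]
    rw [Real.rpow_def_of_pos (by norm_num : (0:ℝ) < 2) x]
  have hderiv : ∀ x : ℝ, HasDerivAt f
      (Real.exp ((1 - Real.exp (c * x)) / γb) * (1 - c * x * Real.exp (c * x) / γb)) x :=
    fun x => stmt7_hasDerivAt γb x
  have hcontf : Continuous f := by
    have : Differentiable ℝ f := fun x => (hderiv x).differentiableAt
    exact this.continuous
  set g : ℝ → ℝ := fun x => c * x * Real.exp (c * x) with hg_def
  have hgmono : ∀ a b : ℝ, 0 ≤ a → a < b → g a < g b := by
    intro a b ha hab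
    have h1 : c * a * Real.exp (c * a) ≤ c * a * Real.exp (c * b) := by
      have := (Real.exp_le_exp.2 (le_of_lt (by nlinarith : c * a < c * b)))
      exact mul_le_mul_of_nonneg_left this (by positivity)
    have h2 : c * a * Real.exp (c * b) < c * b * Real.exp (c * b) :=
      mul_lt_mul_of_pos_right (mul_lt_mul_of_pos_left hab hc) (Real.exp_pos _)
    calc g a = c * a * Real.exp (c * a) := rfl
      _ ≤ c * a * Real.exp (c * b) := h1
      _ < c * b * Real.exp (c * b) := h2
  have hgcont : Continuous g := by continuity
  obtain ⟨xs, hxsmem, hxs⟩ : ∃ xs ∈ Set.Icc (0:ℝ) ((γb + 1)/c), g xs = γb := by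
    have hB : (0:ℝ) ≤ (γb + 1)/c := by positivity
    have h0 : g 0 = 0 := by simp [hg_def]
    have hgB : γb ≤ g ((γb + 1)/c) := by
      have h1 : c * ((γb + 1)/c) = γb + 1 := by field_simp
      have h2 : (1:ℝ) ≤ Real.exp (γb + 1) := by
        rw [Real.one_le_exp_iff]; positivity
      calc γb ≤ (γb + 1) * 1 := by nlinarith
        _ ≤ (γb + 1) * Real.exp (γb + 1) := by nlinarith
        _ = g ((γb + 1)/c) := by rw [hg_def]; simp only; rw [h1]
    have hmem : γb ∈ Set.Icc (g 0) (g ((γb+1)/c)) := by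
      constructor
      · rw [h0]; exact hγb.le
      · exact hgB
    obtain ⟨xs, h1, h2⟩ := intermediate_value_Icc hB hgcont.continuousOn hmem
    exact ⟨xs, h1, h2⟩
  have hxs0 : 0 < xs := by
    rcases lt_or_eq_of_le hxsmem.1 with h | h
    · exact h
    · exfalso; rw [← h] at hxs; simp [hg_def] at hxs; linarith
  have hmono : StrictMonoOn f (Set.Icc 0 xs) := by
    apply strictMonoOn_of_deriv_pos (convex_Icc 0 xs) hcontf.continuousOn
    intro x hx
    rw [interior_Icc] at hx
    rw [(hderiv x).deriv]
    have hgx : g x < γb := by rw [← hxs]; exact hgmono x xs hx.1.le hx.2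
    have h1 : 0 < 1 - c * x * Real.exp (c * x) / γb := by
      rw [sub_pos, div_lt_one hγb]; exact hgx
    positivity
  have hanti : StrictAntiOn f (Set.Ici xs) := by
    apply strictAntiOn_of_deriv_neg (convex_Ici xs) hcontf.continuousOn
    intro x hx
    rw [interior_Ici] at hx
    rw [(hderiv x).deriv]
    have hgx : γb < g x := by rw [← hxs]; exact hgmono xs x hxs0.le hx
    have h1 : 1 - c * x * Real.exp (c * x) / γb < 0 := by
      rw [sub_neg, lt_div_iff₀ hγb, one_mul]; exact hgx
    have h2 := Real.exp_pos ((1 - Real.exp (c * x)) / γb)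
    nlinarith
  have hmax : ∀ x : ℝ, 0 ≤ x → f x ≤ f xs := by
    intro x hx
    rcases le_total x xs with h | h
    · rcases lt_or_eq_of_le h with h' | h'
      · exact (hmono ⟨hx, h⟩ ⟨hxs0.le, le_refl xs⟩ h').le
      · rw [h']
    · rcases lt_or_eq_of_le h with h' | h'
      · exact (hanti Set.self_mem_Ici h h').le
      · rw [← h']
  have hΓfxs : Γ < f xs := by
    refine lt_of_lt_of_le hΓmax (csSup_le ⟨f xs, xs, hxs0.le, (hrw xs).symm⟩ ?_)
    rintro y ⟨x, hx, rfl⟩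
    rw [hrw x]
    exact hmax x hx
  have hf0 : f 0 = 0 := by simp [hf_def]
  obtain ⟨xmin, hxminmem, hxminval⟩ : ∃ xmin ∈ Set.Icc (0:ℝ) xs, f xmin = Γ := by
    have hmem : Γ ∈ Set.Icc (f 0) (f xs) := ⟨by rw [hf0]; exact hΓ.le, hΓfxs.le⟩
    obtain ⟨z, h1, h2⟩ := intermediate_value_Icc hxs0.le hcontf.continuousOn hmem
    exact ⟨z, h1, h2⟩
  have hxminpos : 0 < xmin := by
    rcases lt_or_eq_of_le hxminmem.1 with h | h
    · exact h
    · exfalso; rw [← h, hf0] at hxminval; linarith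
  have hxminlt : xmin < xs := by
    rcases lt_or_eq_of_le hxminmem.2 with h | h
    · exact h
    · exfalso; rw [h] at hxminval; linarith
  -- upper bound for f
  set K : ℝ := Real.exp (1/γb) * γb * 4 / c^2 with hK_def
  have hKpos : 0 < K := by positivity
  have hfbound : ∀ x : ℝ, 0 < x → f x ≤ K / x := by
    intro x hx
    have hexp_ge : c^2 * x^2 / 4 ≤ Real.exp (c * x) := by
      have h2 : c * x / 2 ≤ Real.exp (c * x / 2) := by
        have := Real.add_one_le_exp (c * x / 2); linarith
      have h3 : (c * x / 2)^2 ≤ (Real.exp (c * x / 2))^2 :=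
        pow_le_pow_left₀ (by positivity) h2 2
      calc c^2 * x^2 / 4 = (c * x / 2)^2 := by ring
        _ ≤ (Real.exp (c * x / 2))^2 := h3
        _ = Real.exp (c * x / 2 + c * x / 2) := by rw [Real.exp_add]; ring
        _ = Real.exp (c * x) := by ring_nf
    have hecx : 0 < Real.exp (c * x) := Real.exp_pos _
    have hs : 0 < Real.exp (c * x) / γb := by positivity
    have hbound : Real.exp (-(Real.exp (c * x) / γb)) ≤ γb / Real.exp (c * x) := by
      rw [Real.exp_neg]
      have h1 : Real.exp (c * x) / γb ≤ Real.exp (Real.exp (c * x) / γb) := by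
        have := Real.add_one_le_exp (Real.exp (c * x) / γb); linarith
      have h2 : (Real.exp (Real.exp (c * x) / γb))⁻¹ ≤ (Real.exp (c * x) / γb)⁻¹ :=
        inv_anti₀ hs h1
      calc (Real.exp (Real.exp (c * x) / γb))⁻¹ ≤ (Real.exp (c * x) / γb)⁻¹ := h2
        _ = γb / Real.exp (c * x) := by rw [inv_div]
    have hsplit : f x = x * (Real.exp (1/γb) * Real.exp (-(Real.exp (c * x) / γb))) := by
      rw [hf_def]
      simp only
      rw [← Real.exp_add]
      ring_nf
    have step1 : f x ≤ x * (Real.exp (1/γb) * (γb / Real.exp (c * x))) := by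
      rw [hsplit]
      apply mul_le_mul_of_nonneg_left _ hx.le
      exact mul_le_mul_of_nonneg_left hbound (Real.exp_pos _).le
    have step2 : γb / Real.exp (c * x) ≤ γb / (c^2 * x^2 / 4) := by
      apply div_le_div_of_nonneg_left hγb.le (by positivity) hexp_ge
    have step3 : x * (Real.exp (1/γb) * (γb / Real.exp (c * x)))
        ≤ x * (Real.exp (1/γb) * (γb / (c^2 * x^2 / 4))) := by
      apply mul_le_mul_of_nonneg_left _ hx.le
      exact mul_le_mul_of_nonneg_left step2 (Real.exp_pos _).le
    have heq : x * (Real.exp (1/γb) * (γb / (c^2 * x^2 / 4))) = K / x := by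
      rw [hK_def]
      field_simp
    linarith
  -- choose b with f b < Γ
  set b : ℝ := max (xs + 1) (K / Γ + 1) with hb_def
  have hbxs : xs < b := lt_of_lt_of_le (by linarith) (le_max_left _ _)
  have hbpos : 0 < b := lt_trans hxs0 hbxs
  have hbK : K / Γ < b := lt_of_lt_of_le (by linarith [div_nonneg hKpos.le hΓ.le])
    (le_max_right _ _)
  have hfb : f b < Γ := by
    have h1 : f b ≤ K / b := hfbound b hbpos
    have h2 : K / b < Γ := by
      rw [div_lt_iff₀ hbpos]
      rw [div_lt_iff₀ hΓ] at hbK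
      linarith
    linarith
  obtain ⟨xmax, hxmaxmem, hxmaxval⟩ : ∃ xmax ∈ Set.Icc xs b, f xmax = Γ := by
    have hmem : Γ ∈ Set.Icc (f b) (f xs) := ⟨hfb.le, hΓfxs.le⟩
    obtain ⟨z, h1, h2⟩ := intermediate_value_Icc' hbxs.le hcontf.continuousOn hmem
    exact ⟨z, h1, h2⟩
  have hxmaxgt : xs < xmax := by
    rcases lt_or_eq_of_le hxmaxmem.1 with h | h
    · exact h
    · exfalso; rw [← h] at hxmaxval; linarith
  refine ⟨xmin, xmax, hxminpos, lt_trans hxminlt hxmaxgt, ?_, ?_, ?_⟩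
  · rw [hrw]; exact hxminval
  · rw [hrw]; exact hxmaxval
  · intro x hx hxval
    rw [hrw] at hxval
    have hxne : x ≠ xs := by
      intro h; rw [h] at hxval; linarith
    rcases le_total x xs with h | h
    · left
      exact hmono.injOn ⟨hx.le, h⟩ ⟨hxminmem.1, hxminmem.2⟩ (by rw [hxval, hxminval])
    · right
      exact hanti.injOn (Set.mem_Ici.mpr h) (Set.mem_Ici.mpr hxmaxmem.1)
        (by rw [hxval, hxmaxval])
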